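/- Let μ be a probability measure on ℝ³ invariant under the central symmetry (x,y,z) ↦ (−x,−y,−z), and let C > 0. If for every Schwartz function f : ℝ³ → ℝ one has Ent_μ(f²) ≤ C ∫_{ℝ³} ( (Xf)² + (Yf)² ) dμ, then for every Schwartz function f : ℝ³ → ℝ one has Ent_μ(f²) ≤ C ∫_{ℝ³} ( (∂_x f)² + (∂_y f)² + ((x²+y²)/4)(∂_z f)² ) dμ(x,y,z). -/

import Mathlib

open MeasureTheory ProbabilityTheory

noncomputable section

/-- The Heisenberg group as ℝ³. -/
abbrev H : Type := ℝ × ℝ × ℝ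

/-- Entropy of `f` with respect to `μ`. -/
def Ent {α : Type*} [MeasurableSpace α] (μ : Measure α) (f : α → ℝ) : ℝ :=
  ∫ a, f a * Real.log (f a) ∂μ - (∫ a, f a ∂μ) * Real.log (∫ a, f a ∂μ)

/-- Partial derivative in the first coordinate. -/
def pdx (f : H → ℝ) (p : H) : ℝ := deriv (fun t => f (t, p.2.1, p.2.2)) p.1

/-- Partial derivative in the second coordinate. -/
def pdy (f : H → ℝ) (p : H) : ℝ := deriv (fun t => f (p.1, t, p.2.2)) p.2.1

/-- Partial derivative in the third coordinate. -/
def pdz (f : H → ℝ) (p : H) : ℝ := deriv (fun t => f (p.1, p.2.1, t)) p.2.2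

/-- The left-invariant vector field `X`. -/
def Xop (f : H → ℝ) (p : H) : ℝ := pdx f p - p.2.1 / 2 * pdz f p

/-- The left-invariant vector field `Y`. -/
def Yop (f : H → ℝ) (p : H) : ℝ := pdy f p + p.1 / 2 * pdz f p

/-- The left-invariant vector field `Z`. -/
def Zop (f : H → ℝ) (p : H) : ℝ := pdz f p

namespace LiAux

/-- standard basis vectors -/
def e1 : H := ((1:ℝ), (0:ℝ), (0:ℝ))
def e2 : H := ((0:ℝ), (1:ℝ), (0:ℝ))
def e3 : H := ((0:ℝ), (0:ℝ), (1:ℝ))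

lemma deriv_line (f : SchwartzMap H ℝ) {c : ℝ → H} {v : H} {t : ℝ}
    (hc : HasDerivAt c v t) :
    deriv (fun s => f (c s)) t = fderiv ℝ f (c t) v := by
  have := (f.differentiableAt.hasFDerivAt.comp_hasDerivAt t hc)
  exact this.deriv

lemma pdx_eq (f : SchwartzMap H ℝ) (p : H) : pdx f p = fderiv ℝ f p e1 := by
  have hc : HasDerivAt (fun t : ℝ => ((t, p.2.1, p.2.2) : H)) e1 p.1 :=
    (hasDerivAt_id' p.1).prodMk ((hasDerivAt_const p.1 p.2.1).prodMk (hasDerivAt_const p.1 p.2.2))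
  exact deriv_line f hc

lemma pdy_eq (f : SchwartzMap H ℝ) (p : H) : pdy f p = fderiv ℝ f p e2 := by
  have hc : HasDerivAt (fun t : ℝ => ((p.1, t, p.2.2) : H)) e2 p.2.1 :=
    (hasDerivAt_const p.2.1 p.1).prodMk ((hasDerivAt_id' p.2.1).prodMk (hasDerivAt_const p.2.1 p.2.2))
  exact deriv_line f hc

lemma pdz_eq (f : SchwartzMap H ℝ) (p : H) : pdz f p = fderiv ℝ f p e3 := by
  have hc : HasDerivAt (fun t : ℝ => ((p.1, p.2.1, t) : H)) e3 p.2.2 :=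
    (hasDerivAt_const p.2.2 p.1).prodMk ((hasDerivAt_const p.2.2 p.2.1).prodMk (hasDerivAt_id' p.2.2))
  exact deriv_line f hc

/-- the Schwartz function `f ∘ (-·)` -/
def negComp (f : SchwartzMap H ℝ) : SchwartzMap H ℝ :=
  SchwartzMap.compCLMOfContinuousLinearEquiv ℝ
    (ContinuousLinearEquiv.neg ℝ : H ≃L[ℝ] H) f

lemma negComp_apply (f : SchwartzMap H ℝ) (h : H) : negComp f h = f (-h) := rfl

lemma pdx_negComp (f : SchwartzMap H ℝ) (p : H) :
    pdx (negComp f) p = -(fderiv ℝ f (-p) e1) := by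
  have hc : HasDerivAt (fun t : ℝ => ((-t, -p.2.1, -p.2.2) : H)) (-e1) p.1 := by
    have h1 : HasDerivAt (fun t : ℝ => -t) (-1 : ℝ) p.1 := (hasDerivAt_id' p.1).neg
    have := h1.prodMk ((hasDerivAt_const p.1 (-p.2.1)).prodMk (hasDerivAt_const p.1 (-p.2.2)))
    convert this using 1
    simp [e1, Prod.ext_iff]
  have key : pdx (negComp f) p = fderiv ℝ f ((-p.1, -p.2.1, -p.2.2) : H) (-e1) := by
    have := deriv_line f hc
    show deriv (fun s => f (-s, -p.2.1, -p.2.2)) p.1 = _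
    exact this
  rw [key]
  have hp : ((-p.1, -p.2.1, -p.2.2) : H) = -p := by simp [Prod.ext_iff]
  rw [hp, (fderiv ℝ f (-p)).map_neg]

lemma pdy_negComp (f : SchwartzMap H ℝ) (p : H) :
    pdy (negComp f) p = -(fderiv ℝ f (-p) e2) := by
  have hc : HasDerivAt (fun t : ℝ => ((-p.1, -t, -p.2.2) : H)) (-e2) p.2.1 := by
    have h1 : HasDerivAt (fun t : ℝ => -t) (-1 : ℝ) p.2.1 := (hasDerivAt_id' p.2.1).neg
    have := (hasDerivAt_const p.2.1 (-p.1)).prodMk (h1.prodMk (hasDerivAt_const p.2.1 (-p.2.2)))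
    convert this using 1
    simp [e2, Prod.ext_iff]
  have key : pdy (negComp f) p = fderiv ℝ f ((-p.1, -p.2.1, -p.2.2) : H) (-e2) := by
    have := deriv_line f hc
    simpa [pdy, negComp_apply, Prod.ext_iff] using this
  rw [key]
  have hp : ((-p.1, -p.2.1, -p.2.2) : H) = -p := by simp [Prod.ext_iff]
  rw [hp, (fderiv ℝ f (-p)).map_neg]

lemma pdz_negComp (f : SchwartzMap H ℝ) (p : H) :
    pdz (negComp f) p = -(fderiv ℝ f (-p) e3) := by
  have hc : HasDerivAt (fun t : ℝ => ((-p.1, -p.2.1, -t) : H)) (-e3) p.2.2 := by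
    have h1 : HasDerivAt (fun t : ℝ => -t) (-1 : ℝ) p.2.2 := (hasDerivAt_id' p.2.2).neg
    have := (hasDerivAt_const p.2.2 (-p.1)).prodMk ((hasDerivAt_const p.2.2 (-p.2.1)).prodMk h1)
    convert this using 1
    simp [e3, Prod.ext_iff]
  have key : pdz (negComp f) p = fderiv ℝ f ((-p.1, -p.2.1, -p.2.2) : H) (-e3) := by
    have := deriv_line f hc
    simpa [pdz, negComp_apply, Prod.ext_iff] using this
  rw [key]
  have hp : ((-p.1, -p.2.1, -p.2.2) : H) = -p := by simp [Prod.ext_iff]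
  rw [hp, (fderiv ℝ f (-p)).map_neg]

/-- symmetry change of variables -/
lemma int_symm (μ : Measure H)
    (hsym : μ.map (fun h : H => ((-h.1, -h.2.1, -h.2.2) : H)) = μ)
    (φ : H → ℝ) (hφ : Continuous φ) :
    ∫ h, φ (-h) ∂μ = ∫ h, φ h ∂μ := by
  have hm : Measurable (fun h : H => ((-h.1, -h.2.1, -h.2.2) : H)) := by
    fun_prop
  have hfun : (fun h : H => φ (-h)) = fun h : H => φ ((-h.1, -h.2.1, -h.2.2) : H) := by
    funext h; rfl
  calc ∫ h, φ (-h) ∂μ = ∫ h, φ ((-h.1, -h.2.1, -h.2.2) : H) ∂μ := by rw [hfun]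
    _ = ∫ h, φ h ∂μ := by
        rw [← integral_map hm.aemeasurable hφ.aestronglyMeasurable, hsym]

/-- Schwartz functions are bounded -/
lemma bound0 (u : SchwartzMap H ℝ) : ∃ M : ℝ, ∀ x, |u x| ≤ M := by
  obtain ⟨M, _, hM⟩ := u.decay 0 0
  exact ⟨M, fun x => by simpa using hM x⟩

lemma bound1 (u : SchwartzMap H ℝ) : ∃ M : ℝ, ∀ x, ‖x‖ * |u x| ≤ M := by
  obtain ⟨M, _, hM⟩ := u.decay 1 0
  exact ⟨M, fun x => by simpa using hM x⟩

end LiAux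

open LiAux

set_option maxHeartbeats 1000000 in
theorem li_lsi_symmetrized (μ : Measure H) [IsProbabilityMeasure μ]
    (hsym : μ.map (fun h : H => ((-h.1, -h.2.1, -h.2.2) : H)) = μ)
    (C : ℝ) (hC : 0 < C)
    (hLSI : ∀ f : SchwartzMap H ℝ,
      Ent μ (fun h => f h ^ 2) ≤ C * ∫ h, ((Xop f h) ^ 2 + (Yop f h) ^ 2) ∂μ) :
    ∀ f : SchwartzMap H ℝ,
      Ent μ (fun h => f h ^ 2) ≤
        C * ∫ h, ((pdx f h) ^ 2 + (pdy f h) ^ 2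
          + (h.1 ^ 2 + h.2.1 ^ 2) / 4 * (pdz f h) ^ 2) ∂μ := by
  intro f
  set g := negComp f with hgdef
  -- Schwartz partial derivative maps
  set Fx := LineDeriv.lineDerivOpCLM ℝ (SchwartzMap H ℝ) e1 f with hFx
  set Fy := LineDeriv.lineDerivOpCLM ℝ (SchwartzMap H ℝ) e2 f with hFy
  set Fz := LineDeriv.lineDerivOpCLM ℝ (SchwartzMap H ℝ) e3 f with hFz
  have hfx : ∀ p, pdx f p = Fx p := fun p => by
    rw [pdx_eq, hFx, LineDeriv.lineDerivOpCLM_apply, SchwartzMap.lineDerivOp_apply_eq_fderiv]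
  have hfy : ∀ p, pdy f p = Fy p := fun p => by
    rw [pdy_eq, hFy, LineDeriv.lineDerivOpCLM_apply, SchwartzMap.lineDerivOp_apply_eq_fderiv]
  have hfz : ∀ p, pdz f p = Fz p := fun p => by
    rw [pdz_eq, hFz, LineDeriv.lineDerivOpCLM_apply, SchwartzMap.lineDerivOp_apply_eq_fderiv]
  -- the two Dirichlet integrands
  set A : H → ℝ := fun h => (Xop f h) ^ 2 + (Yop f h) ^ 2 with hA
  set B : H → ℝ := fun h =>
    (Fx h + h.2.1 / 2 * Fz h) ^ 2 + (Fy h - h.1 / 2 * Fz h) ^ 2 with hB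
  have hApt : ∀ h, A h = (Fx h - h.2.1 / 2 * Fz h) ^ 2 + (Fy h + h.1 / 2 * Fz h) ^ 2 := by
    intro h
    simp only [hA, Xop, Yop, Zop, hfx, hfy, hfz]
  -- pointwise identity for the symmetrized function
  have hXYg : ∀ p : H, (Xop g p) ^ 2 + (Yop g p) ^ 2 = B (-p) := by
    intro p
    have h1 := pdx_negComp f p
    have h2 := pdy_negComp f p
    have h3 := pdz_negComp f p
    have e1' : Fx (-p) = fderiv ℝ f (-p) e1 := SchwartzMap.lineDerivOp_apply_eq_fderiv e1 f (-p)
    have e2' : Fy (-p) = fderiv ℝ f (-p) e2 := SchwartzMap.lineDerivOp_apply_eq_fderiv e2 f (-p)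
    have e3' : Fz (-p) = fderiv ℝ f (-p) e3 := SchwartzMap.lineDerivOp_apply_eq_fderiv e3 f (-p)
    have hp1 : (-p : H).1 = -p.1 := rfl
    have hp2 : (-p : H).2.1 = -p.2.1 := rfl
    simp only [hB, Xop, Yop, hgdef, h1, h2, h3, hp1, hp2, e1', e2', e3']
    ring
  -- continuity of A and B
  have hAcont : Continuous A := by
    have : A = fun h => (Fx h - h.2.1 / 2 * Fz h) ^ 2 + (Fy h + h.1 / 2 * Fz h) ^ 2 :=
      funext hApt
    rw [this]
    fun_prop
  have hBcont : Continuous B := by rw [hB]; fun_prop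
  -- bounds
  obtain ⟨Kx, hKx⟩ := bound0 Fx
  obtain ⟨Ky, hKy⟩ := bound0 Fy
  obtain ⟨Kz, hKz⟩ := bound1 Fz
  have hcross : ∀ (h : H) (c : ℝ), |c| ≤ ‖h‖ → |c / 2 * Fz h| ≤ Kz / 2 := by
    intro h c hc
    have h1 : |c / 2 * Fz h| = |c| / 2 * |Fz h| := by
      rw [abs_mul, abs_div]; norm_num
    rw [h1]
    have h2 : |c| / 2 * |Fz h| ≤ ‖h‖ / 2 * |Fz h| := by
      apply mul_le_mul_of_nonneg_right _ (abs_nonneg _)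
      linarith
    have h3 : ‖h‖ / 2 * |Fz h| ≤ Kz / 2 := by
      have := hKz h
      linarith
    linarith
  have habs1 : ∀ h : H, |(h : H).1| ≤ ‖h‖ := fun h => norm_fst_le h
  have habs2 : ∀ h : H, |(h : H).2.1| ≤ ‖h‖ := fun h =>
    le_trans (norm_fst_le h.2) (norm_snd_le h)
  set M : ℝ := (Kx + Kz / 2) ^ 2 + (Ky + Kz / 2) ^ 2 with hM
  have hboundA : ∀ h, |A h| ≤ M := by
    intro h
    have b1 := abs_le.mp (hKx h)
    have b2 := abs_le.mp (hKy h)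
    have b3 := abs_le.mp (hcross h _ (habs2 h))
    have b4 := abs_le.mp (hcross h _ (habs1 h))
    have t1 : -(Kx + Kz / 2) ≤ Fx h - h.2.1 / 2 * Fz h ∧
        Fx h - h.2.1 / 2 * Fz h ≤ Kx + Kz / 2 := by constructor <;> linarith
    have t2 : -(Ky + Kz / 2) ≤ Fy h + h.1 / 2 * Fz h ∧
        Fy h + h.1 / 2 * Fz h ≤ Ky + Kz / 2 := by constructor <;> linarith
    rw [hApt h, abs_of_nonneg (by positivity)]
    exact add_le_add (sq_le_sq' t1.1 t1.2) (sq_le_sq' t2.1 t2.2)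
  have hboundB : ∀ h, |B h| ≤ M := by
    intro h
    have b1 := abs_le.mp (hKx h)
    have b2 := abs_le.mp (hKy h)
    have b3 := abs_le.mp (hcross h _ (habs2 h))
    have b4 := abs_le.mp (hcross h _ (habs1 h))
    have t1 : -(Kx + Kz / 2) ≤ Fx h + h.2.1 / 2 * Fz h ∧
        Fx h + h.2.1 / 2 * Fz h ≤ Kx + Kz / 2 := by constructor <;> linarith
    have t2 : -(Ky + Kz / 2) ≤ Fy h - h.1 / 2 * Fz h ∧
        Fy h - h.1 / 2 * Fz h ≤ Ky + Kz / 2 := by constructor <;> linarith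
    rw [hB, abs_of_nonneg (by positivity)]
    exact add_le_add (sq_le_sq' t1.1 t1.2) (sq_le_sq' t2.1 t2.2)
  have hAint : Integrable A μ := by
    refine Integrable.mono' (integrable_const M) hAcont.aestronglyMeasurable ?_
    exact Filter.Eventually.of_forall (fun h => by simpa using hboundA h)
  have hBint : Integrable B μ := by
    refine Integrable.mono' (integrable_const M) hBcont.aestronglyMeasurable ?_
    exact Filter.Eventually.of_forall (fun h => by simpa using hboundB h)
  -- entropy transfer
  have hEnt : Ent μ (fun h => g h ^ 2) = Ent μ (fun h => f h ^ 2) := by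
    unfold Ent
    have key : ∀ φ : ℝ → ℝ, Continuous φ →
        (∫ h, φ (f (-h)) ∂μ) = ∫ h, φ (f h) ∂μ := by
      intro φ hφ
      exact int_symm μ hsym (fun h => φ (f h)) (hφ.comp f.continuous)
    have hgf : ∀ h : H, g h = f (-h) := fun h => rfl
    have k1 : (∫ h, g h ^ 2 * Real.log (g h ^ 2) ∂μ)
        = ∫ h, f h ^ 2 * Real.log (f h ^ 2) ∂μ := by
      have := key (fun x => x ^ 2 * Real.log (x ^ 2))
        (by
          have : Continuous fun x : ℝ => (x ^ 2) * Real.log (x ^ 2) :=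
            Real.continuous_mul_log.comp (continuous_pow 2)
          exact this)
      simpa [hgf] using this
    have k2 : (∫ h, g h ^ 2 ∂μ) = ∫ h, f h ^ 2 ∂μ := by
      have := key (fun x => x ^ 2) (continuous_pow 2)
      simpa [hgf] using this
    rw [k1, k2]
  -- Dirichlet integral transfer
  have hIntg : (∫ h, ((Xop g h) ^ 2 + (Yop g h) ^ 2) ∂μ) = ∫ h, B h ∂μ := by
    have : (∫ h, ((Xop g h) ^ 2 + (Yop g h) ^ 2) ∂μ) = ∫ h, B (-h) ∂μ := by
      congr 1; funext h; exact hXYg h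
    rw [this]
    exact int_symm μ hsym B hBcont
  -- the two inequalities
  have ineq1 : Ent μ (fun h => f h ^ 2) ≤ C * ∫ h, A h ∂μ := hLSI f
  have ineq2 : Ent μ (fun h => f h ^ 2) ≤ C * ∫ h, B h ∂μ := by
    have := hLSI g
    rw [hEnt, hIntg] at this
    exact this
  -- combine
  have hT : (∫ h, ((pdx f h) ^ 2 + (pdy f h) ^ 2
      + (h.1 ^ 2 + h.2.1 ^ 2) / 4 * (pdz f h) ^ 2) ∂μ)
      = (∫ h, A h ∂μ + ∫ h, B h ∂μ) / 2 := by
    rw [← integral_add hAint hBint]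
    rw [← integral_div]
    congr 1
    funext h
    rw [hApt h, hB]
    simp only [hfx, hfy, hfz]
    ring
  rw [hT]
  linarith

end
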